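/- Let D be a linearly connected digraph with η ≥ 3 strong components, all nontrivial. Let p and q be indices with p + 2 ≤ q ≤ η, let x ∈ U_i^{(p)} and z ∈ U_k^{(q)}. If D has a directed (x,z)-walk of length s·κ_{p+1}κ_{p+2}···κ_q for some positive integer s, then there exist j ∈ ZMod κ_{p+1} and a vertex y ∈ U_j^{(p+1)} such that: (i) there is a positive integer K such that for every integer k' ≥ K there is a directed (x,y)-walk of length k'·κ_{p+1}; and (ii) there is a positive integer K' such that for every integer k'' ≥ K' there is a directed (y,z)-walk of length k''·κ_{p+1}. -/

import Mathlib

/-- A digraph: a finite vertex type with an irreflexive arc relation (no loops). -/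
structure Digraph' (V : Type*) where
  Adj : V → V → Prop
  irrefl : ∀ v, ¬ Adj v v

namespace Digraph'

variable {V : Type*}

/-- There is a directed walk of length `m` from `x` to `y` in `D`;
i.e. `y` is an `m`-step prey of `x`. -/
def HasWalk (D : Digraph' V) (m : ℕ) (x y : V) : Prop :=
  ∃ f : ℕ → V, f 0 = x ∧ f m = y ∧ ∀ t, t < m → D.Adj (f t) (f (t + 1))

/-- There is a directed walk of length `m` from `x` to `y` staying inside `S`. -/
def HasWalkIn (D : Digraph' V) (S : Set V) (m : ℕ) (x y : V) : Prop :=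
  ∃ f : ℕ → V, f 0 = x ∧ f m = y ∧ (∀ t, t ≤ m → f t ∈ S) ∧
    ∀ t, t < m → D.Adj (f t) (f (t + 1))

/-- The `m`-step competition graph `C(D^m)` of `D`. -/
def compGraph (D : Digraph' V) (m : ℕ) : SimpleGraph V where
  Adj u v := u ≠ v ∧ ∃ z, D.HasWalk m u z ∧ D.HasWalk m v z
  symm := by
    constructor
    rintro u v ⟨hne, z, h1, h2⟩
    exact ⟨hne.symm, z, h2, h1⟩
  loopless := ⟨fun v h => h.1 rfl⟩

/-- The sequence `{C(D^m)}_{m ≥ 1}` converges. -/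
def CompConverges (D : Digraph' V) : Prop :=
  ∃ N : ℕ, 1 ≤ N ∧ ∀ m, N ≤ m → D.compGraph m = D.compGraph N

/-- The sequence `{C(D^m)}_{m ≥ 1}` converges to the graph `G`. -/
def CompConvergesTo (D : Digraph' V) (G : SimpleGraph V) : Prop :=
  ∃ N : ℕ, 1 ≤ N ∧ ∀ m, N ≤ m → D.compGraph m = G

/-- `D` is linearly connected with strong components `Vset 1, …, Vset η`. -/
structure IsLinConn (D : Digraph' V) (η : ℕ) (Vset : ℕ → Set V) : Prop where
  nonempty : ∀ i, 1 ≤ i → i ≤ η → (Vset i).Nonempty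
  cover : ∀ v : V, ∃ i, 1 ≤ i ∧ i ≤ η ∧ v ∈ Vset i
  disjoint' : ∀ i j, 1 ≤ i → i ≤ η → 1 ≤ j → j ≤ η →
      ∀ v : V, v ∈ Vset i → v ∈ Vset j → i = j
  strong : ∀ i, 1 ≤ i → i ≤ η → ∀ x ∈ Vset i, ∀ y ∈ Vset i,
      ∃ m, D.HasWalkIn (Vset i) m x y
  arcs : ∀ x y : V, D.Adj x y → ∃ i, 1 ≤ i ∧
      ((i ≤ η ∧ x ∈ Vset i ∧ y ∈ Vset i) ∨
       (i + 1 ≤ η ∧ x ∈ Vset i ∧ y ∈ Vset (i + 1)))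
  linked : ∀ i, 1 ≤ i → i + 1 ≤ η → ∃ x ∈ Vset i, ∃ y ∈ Vset (i + 1), D.Adj x y

/-- A component with vertex set `S` is trivial if `S` is a singleton. -/
def IsTrivialComp (S : Set V) : Prop := ∃ v : V, S = {v}

/-- `κ` is the index of imprimitivity of the (strong) component with vertex set `S`:
the gcd of the lengths of all closed directed walks inside `S`. -/
def IsImprimIndex (D : Digraph' V) (S : Set V) (κ : ℕ) : Prop :=
  (∀ (x : V) (m : ℕ), x ∈ S → 0 < m → D.HasWalkIn S m x x → κ ∣ m) ∧
  ∀ d : ℕ, (∀ (x : V) (m : ℕ), x ∈ S → 0 < m → D.HasWalkIn S m x x → d ∣ m) → d ∣ κ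

/-- `u` is an imprimitivity labelling on `S`: along any arc inside `S` the label
increases by one.  Its fibers are the sets of imprimitivity. -/
def IsImprimLabelling (D : Digraph' V) (S : Set V) {κ : ℕ} (u : V → ZMod κ) : Prop :=
  ∀ x ∈ S, ∀ y ∈ S, D.Adj x y → u y = u x + 1

/-- `(k, l) ∈ I(D_{p,p+1})`: some arc goes from a vertex of `U_k^{(p)}` to a vertex of
`U_l^{(p+1)}`. -/
def InI (D : Digraph' V) (Vset : ℕ → Set V) {κ : ℕ → ℕ}
    (u : ∀ i : ℕ, V → ZMod (κ i)) (p : ℕ) (k : ZMod (κ p)) (l : ZMod (κ (p + 1))) : Prop :=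
  ∃ x ∈ Vset p, ∃ y ∈ Vset (p + 1), D.Adj x y ∧ u p x = k ∧ u (p + 1) y = l

/-- `(i, j)` is an edge of the bipartite graph `B_{p,p+1}`. -/
def BAdj (D : Digraph' V) (Vset : ℕ → Set V) {κ : ℕ → ℕ}
    (u : ∀ i : ℕ, V → ZMod (κ i)) (p : ℕ) (i : ZMod (κ p)) (j : ZMod (κ (p + 1))) : Prop :=
  ∃ (k : ZMod (κ p)) (l : ZMod (κ (p + 1))) (a : ℤ),
    InI D Vset u p k l ∧ i = k + 1 + (a : ZMod (κ p)) ∧ j = l + (a : ZMod (κ (p + 1)))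

/-- The competition skeleton graph (CS-graph) `PT_D^{(η)}`: vertices are pairs `⟨r, i⟩`
with `i ∈ ZMod (κ r)` (only `1 ≤ r ≤ η` carries edges); `⟨p, i⟩` and `⟨p+1, j⟩` are
adjacent exactly when `i` and `j` are adjacent in `B_{p,p+1}`. -/
def csGraph (D : Digraph' V) (Vset : ℕ → Set V) {κ : ℕ → ℕ}
    (u : ∀ i : ℕ, V → ZMod (κ i)) (η : ℕ) : SimpleGraph ((r : ℕ) × ZMod (κ r)) where
  Adj a b := ∃ p, 1 ≤ p ∧ p + 1 ≤ η ∧ ∃ (i : ZMod (κ p)) (j : ZMod (κ (p + 1))),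
    BAdj D Vset u p i j ∧
    ((a = ⟨p, i⟩ ∧ b = ⟨p + 1, j⟩) ∨ (a = ⟨p + 1, j⟩ ∧ b = ⟨p, i⟩))
  symm := by
    constructor
    rintro a b ⟨p, h1, h2, i, j, hB, hab⟩
    exact ⟨p, h1, h2, i, j, hB,
      hab.elim (fun h => Or.inr ⟨h.2, h.1⟩) (fun h => Or.inl ⟨h.2, h.1⟩)⟩
  loopless := by
    constructor
    rintro a ⟨p, _, _, i, j, _, hab⟩
    rcases hab with ⟨ha, hb⟩ | ⟨ha, hb⟩
    · have h : p = p + 1 := congrArg Sigma.fst (ha.symm.trans hb)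
      omega
    · have h : p + 1 = p := congrArg Sigma.fst (ha.symm.trans hb)
      omega

end Digraph'


namespace Digraph'

variable {V : Type*}

lemma hasWalk_append {D : Digraph' V} {m n : ℕ} {x y z : V}
    (h1 : D.HasWalk m x y) (h2 : D.HasWalk n y z) : D.HasWalk (m + n) x z := by
  obtain ⟨f, hf0, hfm, hfa⟩ := h1
  obtain ⟨g, hg0, hgn, hga⟩ := h2
  refine ⟨fun t => if t < m then f t else g (t - m), ?_, ?_, ?_⟩
  · by_cases h : 0 < m
    · simpa [h] using hf0
    · have : m = 0 := by omega
      subst this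
      simp [hg0, ← hfm, hf0]
  · simp only [show ¬ (m + n < m) by omega, if_neg, Nat.add_sub_cancel_left, hgn, not_false_iff]
  · intro t ht
    by_cases h : t + 1 < m
    · simp only [show t < m by omega, h, if_pos]
      exact hfa t (by omega)
    · by_cases h' : t < m
      · have hm : t + 1 = m := by omega
        simp only [h', h, if_pos, if_neg]
        have : g (t + 1 - m) = f (t + 1) := by
          rw [hm]; simp [hg0, hfm]
        rw [this]
        exact hfa t (by omega)
      · simp only [h', h, if_neg]
        have : t + 1 - m = (t - m) + 1 := by omega
        rw [this]
        exact hga (t - m) (by omega)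

lemma hasWalkIn_append {D : Digraph' V} {S : Set V} {m n : ℕ} {x y z : V}
    (h1 : D.HasWalkIn S m x y) (h2 : D.HasWalkIn S n y z) : D.HasWalkIn S (m + n) x z := by
  obtain ⟨f, hf0, hfm, hfS, hfa⟩ := h1
  obtain ⟨g, hg0, hgn, hgS, hga⟩ := h2
  refine ⟨fun t => if t < m then f t else g (t - m), ?_, ?_, ?_, ?_⟩
  · by_cases h : 0 < m
    · simpa [h] using hf0
    · have : m = 0 := by omega
      subst this
      simp [hg0, ← hfm, hf0]
  · simp only [show ¬ (m + n < m) by omega, if_neg, Nat.add_sub_cancel_left, hgn, not_false_iff]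
  · intro t ht
    by_cases h : t < m
    · simp only [h, if_pos]; exact hfS t (by omega)
    · simp only [h, if_neg]; exact hgS (t - m) (by omega)
  · intro t ht
    by_cases h : t + 1 < m
    · simp only [show t < m by omega, h, if_pos]
      exact hfa t (by omega)
    · by_cases h' : t < m
      · have hm : t + 1 = m := by omega
        simp only [h', h, if_pos, if_neg]
        have : g (t + 1 - m) = f (t + 1) := by
          rw [hm]; simp [hg0, hfm]
        rw [this]
        exact hfa t (by omega)
      · simp only [h', h, if_neg]
        have : t + 1 - m = (t - m) + 1 := by omega
        rw [this]
        exact hga (t - m) (by omega)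

lemma HasWalkIn.hasWalk {D : Digraph' V} {S : Set V} {m : ℕ} {x y : V}
    (h : D.HasWalkIn S m x y) : D.HasWalk m x y := by
  obtain ⟨f, h0, hm, _, ha⟩ := h
  exact ⟨f, h0, hm, ha⟩

lemma eq_of_walkIn_zero {D : Digraph' V} {S : Set V} {x y : V}
    (h : D.HasWalkIn S 0 x y) : x = y := by
  obtain ⟨f, h0, hm, _, _⟩ := h
  rw [← h0, ← hm]

lemma walkIn_single {D : Digraph' V} {S : Set V} {x y : V} (hx : x ∈ S) (hy : y ∈ S)
    (h : D.Adj x y) : D.HasWalkIn S 1 x y := by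
  refine ⟨fun t => if t = 0 then x else y, by simp, by simp, ?_, ?_⟩
  · intro t ht
    interval_cases t <;> simp [hx, hy]
  · intro t ht
    have : t = 0 := by omega
    subst this
    simpa using h

lemma forward_walk {D : Digraph' V} {S : Set V}
    (hout : ∀ v ∈ S, ∃ w ∈ S, D.Adj v w) :
    ∀ n : ℕ, ∀ v ∈ S, ∃ w ∈ S, D.HasWalkIn S n v w := by
  intro n
  induction n with
  | zero =>
      intro v hv
      exact ⟨v, hv, fun _ => v, rfl, rfl, fun t _ => hv, fun t ht => absurd ht (by omega)⟩
  | succ n ih =>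
      intro v hv
      obtain ⟨w, hw, hwalk⟩ := ih v hv
      obtain ⟨w', hw', hadj⟩ := hout w hw
      exact ⟨w', hw', hasWalkIn_append hwalk (walkIn_single hw hw' hadj)⟩

lemma label_walk {D : Digraph' V} {S : Set V} {κ : ℕ} {u : V → ZMod κ}
    (hu : ∀ x ∈ S, ∀ y ∈ S, D.Adj x y → u y = u x + 1) :
    ∀ m : ℕ, ∀ x y : V, D.HasWalkIn S m x y → u y = u x + (m : ZMod κ) := by
  intro m
  induction m with
  | zero => rintro x y ⟨f, h0, hm, _, _⟩; rw [← h0, ← hm]; simp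
  | succ m ih =>
      rintro x y ⟨f, h0, hm, hS, ha⟩
      have h1 : D.HasWalkIn S m x (f m) :=
        ⟨f, h0, rfl, fun t ht => hS t (by omega), fun t ht => ha t (by omega)⟩
      have h2 : u (f (m + 1)) = u (f m) + 1 :=
        hu (f m) (hS m (by omega)) (f (m + 1)) (hS (m + 1) le_rfl) (ha m (by omega))
      rw [← hm] at *
      rw [h2, ih x (f m) h1]
      push_cast
      ring

lemma smul_mem_A {A : Set ℕ} (hadd : ∀ m ∈ A, ∀ n ∈ A, m + n ∈ A) :
    ∀ c : ℕ, 1 ≤ c → ∀ m ∈ A, c * m ∈ A := by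
  intro c hc
  induction c with
  | zero => omega
  | succ c ih =>
      intro m hm
      by_cases h : 1 ≤ c
      · have := hadd _ (ih h m hm) _ hm
        have e : c * m + m = (c+1) * m := by ring
        rwa [e] at this
      · have : c = 0 := by omega
        subst this; simpa using hm

/-- key numerical lemma: an additive-closed set of positive naturals contains all
large multiples of its gcd. -/
lemma key_lemma (A : Set ℕ) (hne : A.Nonempty)
    (hadd : ∀ m ∈ A, ∀ n ∈ A, m + n ∈ A) (hpos : ∀ m ∈ A, 0 < m) :
    ∃ d : ℕ, 0 < d ∧ (∀ m ∈ A, d ∣ m) ∧ (∀ c : ℕ, (∀ m ∈ A, c ∣ m) → c ∣ d) ∧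
      ∃ K : ℕ, 1 ≤ K ∧ ∀ k, K ≤ k → k * d ∈ A := by
  classical
  set B : Set ℕ := {n | 0 < n ∧ ∃ P Q : ℕ, (P ∈ A ∨ P = 0) ∧ (Q ∈ A ∨ Q = 0) ∧ P = Q + n} with hB
  obtain ⟨m0, hm0⟩ := hne
  have hm0B : m0 ∈ B := ⟨hpos _ hm0, m0, 0, Or.inl hm0, Or.inr rfl, by omega⟩
  have hBne : B.Nonempty := ⟨m0, hm0B⟩
  set d := sInf B with hd
  have hdB : d ∈ B := Nat.sInf_mem hBne
  obtain ⟨hdpos, P, Q, hP, hQ, hPQ⟩ := hdB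
  have hAQ : ∀ c : ℕ, ∀ R : ℕ, (R ∈ A ∨ R = 0) → (c * R ∈ A ∨ c * R = 0) := by
    rintro c R (hR | hR)
    · by_cases hc : 1 ≤ c
      · exact Or.inl (smul_mem_A hadd c hc R hR)
      · right
        have : c = 0 := by omega
        simp [this]
    · right
      simp [hR]
  have hdvd : ∀ m ∈ A, d ∣ m := by
    intro m hm
    by_contra hndvd
    have hr : 0 < m % d := Nat.pos_of_ne_zero (fun h => hndvd (Nat.dvd_of_mod_eq_zero h))
    have hrd : m % d < d := Nat.mod_lt _ hdpos
    have hrB : m % d ∈ B := by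
      refine ⟨hr, m + (m / d) * Q, (m / d) * P, ?_, ?_, ?_⟩
      · rcases hAQ (m / d) Q hQ with h | h
        · exact Or.inl (hadd _ hm _ h)
        · rw [h]
          exact Or.inl (by simpa using hm)
      · exact hAQ (m / d) P hP
      · rw [hPQ]
        have h1 : d * (m / d) + m % d = m := Nat.div_add_mod m d
        have h2 : (m / d) * (Q + d) = (m / d) * Q + (m / d) * d := by ring
        have h3 : (m / d) * d = d * (m / d) := Nat.mul_comm _ _
        omega
    have := Nat.sInf_le hrB
    omega
  refine ⟨d, hdpos, hdvd, ?_, ?_⟩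
  · intro c hc
    have hcP : c ∣ P := by
      rcases hP with h | h
      · exact hc _ h
      · simp [h]
    have hcQ : c ∣ Q := by
      rcases hQ with h | h
      · exact hc _ h
      · simp [h]
    have : c ∣ Q + d := hPQ ▸ hcP
    exact (Nat.dvd_add_right hcQ).mp this
  · rcases hQ with hQA | hQ0
    · obtain ⟨q, hq⟩ := hdvd Q hQA
      have hq1 : 1 ≤ q := by
        have := hpos Q hQA
        rcases Nat.eq_zero_or_pos q with h | h
        · rw [h] at hq; omega
        · exact h
      have hPval : P = (q + 1) * d := by rw [hPQ, hq]; ring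
      have hPA : P ∈ A := by
        rcases hP with h | h
        · exact h
        · exfalso; omega
      refine ⟨q * q + 1, by omega, ?_⟩
      intro k hk
      set b := k % q with hb
      have hbq : b < q := Nat.mod_lt _ (by omega)
      set a := k / q with ha
      have h2 : q * a + b = k := Nat.div_add_mod k q
      have hab : b ≤ a := by nlinarith [h2, hbq, hk, hq1]
      have hk_eq : k = (a - b) * q + b * (q + 1) := by
        have e1 : (a - b) * q = a * q - b * q := Nat.sub_mul a b q
        have e2 : b * q ≤ a * q := Nat.mul_le_mul_right q hab
        have e3 : b * (q + 1) = b * q + b := by ring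
        have e4 : a * q = q * a := Nat.mul_comm a q
        omega
      have hlen : (a - b) * Q + b * P = k * d := by
        rw [hq, hPval, hk_eq]; ring
      have hmem : (a - b) * Q + b * P ∈ A := by
        rcases hAQ (a - b) Q (Or.inl hQA) with h1 | h1 <;>
          rcases hAQ b P (Or.inl hPA) with h2' | h2'
        · exact hadd _ h1 _ h2'
        · rw [h2']; simpa using h1
        · rw [h1]; simpa using h2'
        · exfalso
          rw [h1, h2'] at hlen
          have hkd : 0 < k * d := Nat.mul_pos (by omega) hdpos
          omega
      rwa [hlen] at hmem
    · have hPA : P ∈ A := by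
        rcases hP with h | h
        · exact h
        · exfalso; omega
      have hPd : P = d := by omega
      refine ⟨1, le_rfl, fun k hk => ?_⟩
      have := smul_mem_A hadd k (by omega) P hPA
      rwa [hPd] at this

lemma exists_ne_of_not_trivial {S : Set V} (hnt : ¬ IsTrivialComp S) {v : V} (hv : v ∈ S) :
    ∃ b ∈ S, b ≠ v := by
  by_contra h
  push_neg at h
  exact hnt ⟨v, Set.eq_singleton_iff_unique_mem.mpr ⟨hv, h⟩⟩

lemma closed_walks {D : Digraph' V} {S : Set V} {κ : ℕ}
    (hstrong : ∀ x ∈ S, ∀ y ∈ S, ∃ m, D.HasWalkIn S m x y)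
    (hnt : ¬ IsTrivialComp S)
    (hκ : D.IsImprimIndex S κ) {a : V} (ha : a ∈ S) :
    0 < κ ∧ ∃ K, 1 ≤ K ∧ ∀ k, K ≤ k → D.HasWalkIn S (k * κ) a a := by
  obtain ⟨b, hbS, hba⟩ := exists_ne_of_not_trivial hnt ha
  obtain ⟨α, wab⟩ := hstrong a ha b hbS
  obtain ⟨β, wba⟩ := hstrong b hbS a ha
  have hα : 0 < α + β := by
    rcases Nat.eq_zero_or_pos (α + β) with h | h
    · exfalso
      apply hba
      have hα0 : α = 0 := by omega
      subst hα0
      exact (eq_of_walkIn_zero wab).symm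
    · exact h
  set A : Set ℕ := {m | 0 < m ∧ D.HasWalkIn S m a a} with hA
  have hne : A.Nonempty := ⟨α + β, hα, hasWalkIn_append wab wba⟩
  have hadd : ∀ m ∈ A, ∀ n ∈ A, m + n ∈ A := by
    rintro m ⟨hm, wm⟩ n ⟨hn, wn⟩
    exact ⟨by omega, hasWalkIn_append wm wn⟩
  have hpos : ∀ m ∈ A, 0 < m := fun m hm => hm.1
  obtain ⟨d, hdpos, hdvd, hmax, K, hK1, hKA⟩ := key_lemma A hne hadd hpos
  have hdκ : d ∣ κ := by
    apply hκ.2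
    intro x m hxS hm hwalk
    obtain ⟨α', w1⟩ := hstrong a ha x hxS
    obtain ⟨β', w2⟩ := hstrong x hxS a ha
    rcases Nat.eq_zero_or_pos (α' + β') with h0 | h0
    · have hα'0 : α' = 0 := by omega
      have hax : a = x := by
        subst hα'0
        exact eq_of_walkIn_zero w1
      subst hax
      exact hdvd m ⟨hm, hwalk⟩
    · have h1 : d ∣ α' + m + β' :=
        hdvd _ ⟨by omega, hasWalkIn_append (hasWalkIn_append w1 hwalk) w2⟩
      have h2 : d ∣ α' + β' := hdvd _ ⟨h0, hasWalkIn_append w1 w2⟩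
      have h3 := Nat.dvd_sub h1 h2
      have e : α' + m + β' - (α' + β') = m := by omega
      rwa [e] at h3
  have hκd : κ ∣ d := hmax κ (fun m hm => hκ.1 a m ha hm.1 hm.2)
  have hdk : d = κ := Nat.dvd_antisymm hdκ hκd
  refine ⟨by omega, K, hK1, fun k hk => ?_⟩
  have hmem := hKA k hk
  rw [← hdk]
  exact hmem.2

end Digraph'

open Digraph' in
/-- if there is an `(x,z)`-walk of length `s·κ_{p+1}···κ_q` with
`p + 2 ≤ q ≤ η`, then some vertex `y` of an imprimitivity class of `D_{p+1}` admits
`(x,y)`-walks and `(y,z)`-walks of all lengths `k·κ_{p+1}` for large `k`. -/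
theorem stmt5 {V : Type*} [Fintype V] (D : Digraph' V) (η : ℕ) (Vset : ℕ → Set V)
    (hD : D.IsLinConn η Vset) (hη : 3 ≤ η)
    (hnt : ∀ i, 1 ≤ i → i ≤ η → ¬ IsTrivialComp (Vset i))
    (κ : ℕ → ℕ) (u : ∀ i : ℕ, V → ZMod (κ i))
    (hκ : ∀ i, 1 ≤ i → i ≤ η → IsImprimIndex D (Vset i) (κ i))
    (hu : ∀ i, 1 ≤ i → i ≤ η → IsImprimLabelling D (Vset i) (u i))
    (p q : ℕ) (hp : 1 ≤ p) (hpq : p + 2 ≤ q) (hq : q ≤ η)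
    (i : ZMod (κ p)) (k : ZMod (κ q)) (x z : V)
    (hx : x ∈ Vset p) (hxi : u p x = i) (hz : z ∈ Vset q) (hzk : u q z = k)
    (s : ℕ) (hs : 1 ≤ s)
    (hw : D.HasWalk (s * ∏ r ∈ Finset.Icc (p + 1) q, κ r) x z) :
    ∃ j : ZMod (κ (p + 1)), ∃ y ∈ Vset (p + 1), u (p + 1) y = j ∧
      (∃ K, 1 ≤ K ∧ ∀ k', K ≤ k' → D.HasWalk (k' * κ (p + 1)) x y) ∧
      (∃ K', 1 ≤ K' ∧ ∀ k'', K' ≤ k'' → D.HasWalk (k'' * κ (p + 1)) y z) := by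
    classical
  set κ₁ := κ (p + 1) with hκ₁def
  set S := Vset (p + 1) with hSdef
  set L := s * ∏ r ∈ Finset.Icc (p + 1) q, κ r with hLdef
  have hp1 : 1 ≤ p + 1 := by omega
  have hp1η : p + 1 ≤ η := by omega
  have hκS : D.IsImprimIndex S κ₁ := hκ (p+1) hp1 hp1η
  have huS : ∀ x ∈ S, ∀ y ∈ S, D.Adj x y → u (p+1) y = u (p+1) x + 1 := hu (p+1) hp1 hp1η
  have hstrongS := hD.strong (p+1) hp1 hp1η
  have hntS := hnt (p+1) hp1 hp1η
  have hκ₁L : κ₁ ∣ L :=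
    Dvd.dvd.mul_left (Finset.dvd_prod_of_mem κ (Finset.mem_Icc.mpr ⟨le_rfl, by omega⟩)) s
  obtain ⟨f, hf0, hfL, hfa⟩ := hw
  -- find the first time the walk leaves components 1..p+1
  set P : ℕ → Prop := fun t => ∃ i, 1 ≤ i ∧ i ≤ p + 1 ∧ f t ∈ Vset i with hPdef
  have hLT : L ∈ {t | ¬ P t} := by
    simp only [Set.mem_setOf_eq, hPdef]
    rintro ⟨i, hi1, hip, hmem⟩
    have hzL : f L ∈ Vset q := by rw [hfL]; exact hz
    have : i = q := hD.disjoint' i q hi1 (by omega) (by omega) hq (f L) hmem hzL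
    omega
  set ts := sInf {t | ¬ P t} with hts_def
  have hts : ¬ P ts := Nat.sInf_mem ⟨L, hLT⟩
  have htsL : ts ≤ L := Nat.sInf_le hLT
  have hP0 : P 0 := ⟨p, hp, by omega, by rw [hf0]; exact hx⟩
  have hts0 : ts ≠ 0 := by
    intro h
    rw [h] at hts
    exact hts hP0
  set t0 := ts - 1 with ht0def
  have ht0lt : t0 < ts := by omega
  have hPt0 : P t0 := by
    by_contra h
    have := Nat.sInf_le (show t0 ∈ {t | ¬ P t} from h)
    omega
  obtain ⟨i, hi1, hip1, hmem⟩ := hPt0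
  have ht0L : t0 < L := by omega
  have hadjt : D.Adj (f t0) (f (t0 + 1)) := hfa t0 ht0L
  have ht01 : t0 + 1 = ts := by omega
  obtain ⟨i', hi'1, hcase⟩ := hD.arcs _ _ hadjt
  have hy0S : f t0 ∈ S := by
    rcases hcase with ⟨hi'η, hx', hy'⟩ | ⟨hi'η, hx', hy'⟩
    · exfalso
      have hii' : i = i' := hD.disjoint' i i' hi1 (by omega) hi'1 hi'η (f t0) hmem hx'
      exact hts ⟨i, hi1, hip1, by rw [← ht01, hii']; exact hy'⟩
    · have hii' : i = i' := hD.disjoint' i i' hi1 (by omega) hi'1 (by omega) (f t0) hmem hx'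
      have hyi : f ts ∈ Vset (i + 1) := by rw [← ht01, hii']; exact hy'
      have hnle : ¬ (i + 1 ≤ p + 1) := fun h => hts ⟨i + 1, by omega, h, hyi⟩
      have hieq : i = p + 1 := by omega
      rw [hSdef, ← hieq]
      exact hmem
  -- the two pieces of the original walk
  have W1 : D.HasWalk t0 x (f t0) := ⟨f, hf0, rfl, fun t ht => hfa t (by omega)⟩
  have W2 : D.HasWalk (L - t0) (f t0) z := by
    refine ⟨fun t => f (t0 + t), by simp, ?_, ?_⟩
    · show f (t0 + (L - t0)) = z
      rw [show t0 + (L - t0) = L by omega]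
      exact hfL
    · intro t ht
      have h := hfa (t0 + t) (by omega)
      rwa [show t0 + t + 1 = t0 + (t + 1) by omega] at h
  -- every vertex of S has an out-neighbour in S
  have hout : ∀ v ∈ S, ∃ w ∈ S, D.Adj v w := by
    intro v hv
    obtain ⟨b, hbS, hbv⟩ := Digraph'.exists_ne_of_not_trivial hntS hv
    obtain ⟨m, g, hg0, hgm, hgS, hga⟩ := hstrongS v hv b hbS
    have hm : 0 < m := by
      rcases Nat.eq_zero_or_pos m with h | h
      · exfalso
        apply hbv
        rw [← hgm, h, hg0]
      · exact h
    refine ⟨g 1, hgS 1 (by omega), ?_⟩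
    have := hga 0 hm
    rwa [hg0] at this
  -- move forward n steps inside S to adjust the residue
  set n := t0 * (κ₁ - 1) with hn
  obtain ⟨y, hyS, hwy⟩ := Digraph'.forward_walk hout n (f t0) hy0S
  -- closed walks at y of all large multiples of κ₁
  obtain ⟨hκpos, K, hK1, hKwalks⟩ := Digraph'.closed_walks hstrongS hntS hκS hyS
  obtain ⟨c0, hc0⟩ : ∃ c0, κ₁ = c0 + 1 := ⟨κ₁ - 1, by omega⟩
  have e1 : t0 + n = t0 * κ₁ := by
    rw [hn, hc0]
    simp only [Nat.add_sub_cancel]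
    ring
  have hdiv1 : κ₁ ∣ t0 + n := by
    rw [e1]
    exact dvd_mul_left κ₁ t0
  set c1 := (t0 + n) / κ₁ with hc1def
  have hc1 : c1 * κ₁ = t0 + n := Nat.div_mul_cancel hdiv1
  -- part (ii) preliminaries
  obtain ⟨β, wback⟩ := hstrongS y hyS (f t0) hy0S
  have lab1 : u (p+1) y = u (p+1) (f t0) + (n : ZMod κ₁) :=
    Digraph'.label_walk huS n (f t0) y hwy
  have lab2 : u (p+1) (f t0) = u (p+1) y + (β : ZMod κ₁) :=
    Digraph'.label_walk huS β y (f t0) wback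
  rw [lab1, add_assoc] at lab2
  have hb0 : (n : ZMod κ₁) + (β : ZMod κ₁) = 0 := left_eq_add.mp lab2
  have h0 : ((n + β : ℕ) : ZMod κ₁) = 0 := by push_cast; exact hb0
  haveI : NeZero κ₁ := ⟨by omega⟩
  have hdiv2 : κ₁ ∣ n + β := (ZMod.natCast_eq_zero_iff _ _).mp h0
  have hdiv3 : κ₁ ∣ β + (L - t0) := by
    have e4 : (β + (L - t0)) + (t0 + n) = (n + β) + L := by omega
    have h5 : κ₁ ∣ (β + (L - t0)) + (t0 + n) := by
      rw [e4]
      exact dvd_add hdiv2 hκ₁L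
    have h6 := Nat.dvd_sub h5 hdiv1
    simpa using h6
  set c2 := (β + (L - t0)) / κ₁ with hc2def
  have hc2 : c2 * κ₁ = β + (L - t0) := Nat.div_mul_cancel hdiv3
  refine ⟨u (p+1) y, y, hyS, rfl, ⟨K + c1, le_trans hK1 (Nat.le_add_right _ _), ?_⟩, ⟨K + c2, le_trans hK1 (Nat.le_add_right _ _), ?_⟩⟩
  · intro k' hk'
    have wcl := hKwalks (k' - c1) (by omega)
    have w : D.HasWalk (t0 + (n + (k' - c1) * κ₁)) x y :=
      Digraph'.hasWalk_append W1
        (Digraph'.hasWalk_append hwy.hasWalk wcl.hasWalk)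
    have e2 : (k' - c1) * κ₁ = k' * κ₁ - c1 * κ₁ := Nat.sub_mul _ _ _
    have e3 : c1 * κ₁ ≤ k' * κ₁ := Nat.mul_le_mul_right _ (by omega)
    have e5 : t0 + (n + (k' - c1) * κ₁) = k' * κ₁ := by omega
    rwa [e5] at w
  · intro k'' hk''
    have wcl := hKwalks (k'' - c2) (by omega)
    have w : D.HasWalk ((k'' - c2) * κ₁ + (β + (L - t0))) y z :=
      Digraph'.hasWalk_append wcl.hasWalk
        (Digraph'.hasWalk_append wback.hasWalk W2)
    have e2 : (k'' - c2) * κ₁ = k'' * κ₁ - c2 * κ₁ := Nat.sub_mul _ _ _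
    have e3 : c2 * κ₁ ≤ k'' * κ₁ := Nat.mul_le_mul_right _ (by omega)
    have e5 : (k'' - c2) * κ₁ + (β + (L - t0)) = k'' * κ₁ := by omega
    rwa [e5] at w
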